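/- Let x, y ∈ {0,1}^ℕ with the shift metric, and suppose there is a sequence of disjoint integer intervals [c_l, c_l + m_l) with m_l → ∞, c_l/(c_l + m_l) → 0, such that x_j = y_j for all j in [c_l, c_l + m_l + M) for every fixed M and large l (i.e., x and y agree on longer and longer blocks whose length dominates their starting position). Then Φ*_{(σ,x,y)}(δ) = 1 for every δ > 0. -/

import Mathlib

open Filter

noncomputable def Phi {α : Type*} (d : α → α → ℝ) (f : α → α) (x y : α) (δ : ℝ) : ℝ :=
  liminf (fun n : ℕ =>
    (((Finset.range (n+1)).filter (fun k => d (f^[k] x) (f^[k] y) < δ)).card : ℝ) / n) atTop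

noncomputable def PhiStar {α : Type*} (d : α → α → ℝ) (f : α → α) (x y : α) (δ : ℝ) : ℝ :=
  limsup (fun n : ℕ =>
    (((Finset.range (n+1)).filter (fun k => d (f^[k] x) (f^[k] y) < δ)).card : ℝ) / n) atTop

open Classical in
noncomputable def shiftDist (x y : ℕ → Bool) : ℝ :=
  if x = y then 0 else (2:ℝ)⁻¹ ^ (sInf {j | x j ≠ y j})

def shift (x : ℕ → Bool) : ℕ → Bool := fun n => x (n+1)

noncomputable def diamX (X : Type*) [MetricSpace X] : ℝ := Metric.diam (Set.univ : Set X)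

lemma shift_iter : ∀ (k : ℕ) (x : ℕ → Bool) (n : ℕ), (shift^[k] x) n = x (n + k)
  | 0, x, n => by simp
  | k+1, x, n => by
    rw [Function.iterate_succ_apply, shift_iter k (shift x) n]
    simp [shift, Nat.add_assoc]

lemma shiftDist_lt_of_agree (x y : ℕ → Bool) (δ : ℝ) (M : ℕ)
    (hM : (2:ℝ)⁻¹ ^ M < δ) (h : ∀ j < M, x j = y j) : shiftDist x y < δ := by
  have hpos : (0:ℝ) < (2:ℝ)⁻¹ ^ M := by positivity
  unfold shiftDist
  split_ifs with hxy
  · linarith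
  · have hne : {j | x j ≠ y j}.Nonempty := by
      rcases Function.ne_iff.mp hxy with ⟨j, hj⟩
      exact ⟨j, hj⟩
    have hle : M ≤ sInf {j | x j ≠ y j} := by
      apply le_csInf hne
      intro b hb
      by_contra hb'
      exact hb (h b (lt_of_not_ge hb'))
    calc (2:ℝ)⁻¹ ^ sInf {j | x j ≠ y j} ≤ (2:ℝ)⁻¹ ^ M :=
          pow_le_pow_of_le_one (by norm_num) (by norm_num) hle
      _ < δ := hM

theorem stmt18 (x y : ℕ → Bool) (c m : ℕ → ℕ)
    (hdisj : ∀ l, c l + m l ≤ c (l+1))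
    (hm : Filter.Tendsto m atTop atTop)
    (hc : Filter.Tendsto (fun l : ℕ => (c l : ℝ) / ((c l + m l : ℕ) : ℝ)) atTop (nhds 0))
    (hagree : ∀ M : ℕ, ∀ᶠ l in atTop, ∀ j, c l ≤ j → j < c l + m l + M → x j = y j) :
    ∀ δ : ℝ, 0 < δ → PhiStar shiftDist shift x y δ = 1 := by
  intro δ hδ
  unfold PhiStar
  set a : ℕ → ℝ := fun n : ℕ =>
    (((Finset.range (n+1)).filter
      (fun k => shiftDist (shift^[k] x) (shift^[k] y) < δ)).card : ℝ) / n with ha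
  have ha_nonneg : ∀ n, 0 ≤ a n := fun n => div_nonneg (by positivity) (Nat.cast_nonneg n)
  have ha_le : ∀ n : ℕ, a n ≤ 1 + 1/(n:ℝ) := by
    intro n
    rcases Nat.eq_zero_or_pos n with h0 | h0
    · subst h0; simp [ha]
    · have hn : (0:ℝ) < n := by exact_mod_cast h0
      have hcard : (((Finset.range (n+1)).filter
          (fun k => shiftDist (shift^[k] x) (shift^[k] y) < δ)).card : ℝ) ≤ (n:ℝ) + 1 := by
        have h1 := Finset.card_filter_le (Finset.range (n+1))
          (fun k => shiftDist (shift^[k] x) (shift^[k] y) < δ)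
        rw [Finset.card_range] at h1
        exact_mod_cast h1
      rw [ha]
      rw [div_le_iff₀ hn]
      have heq : (1 + 1/(n:ℝ)) * n = n + 1 := by field_simp
      rw [heq]
      exact hcard
  have hbdd : IsBoundedUnder (· ≤ ·) atTop a := by
    refine isBoundedUnder_of ⟨2, fun n => le_trans (ha_le n) ?_⟩
    rcases Nat.eq_zero_or_pos n with h0 | h0
    · subst h0; norm_num
    · have hn : (1:ℝ) ≤ n := by exact_mod_cast h0
      have : 1/(n:ℝ) ≤ 1 := by
        rw [div_le_one (by linarith)]; exact hn
      linarith
  have hcb : IsCoboundedUnder (· ≤ ·) atTop a :=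
    (isBoundedUnder_of ⟨0, fun n => ha_nonneg n⟩ :
      IsBoundedUnder (· ≥ ·) atTop a).isCoboundedUnder_le
  have hb : Tendsto (fun n : ℕ => 1 + 1/(n:ℝ)) atTop (nhds 1) := by
    have h1 : Tendsto (fun _ : ℕ => (1:ℝ)) atTop (nhds 1) := tendsto_const_nhds
    have h2 := h1.add tendsto_one_div_atTop_nhds_zero_nat
    rw [add_zero] at h2
    exact h2
  have hupper : limsup a atTop ≤ 1 := by
    have h := limsup_le_limsup (Eventually.of_forall ha_le) hcb hb.isBoundedUnder_le
    rwa [hb.limsup_eq] at h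
  have hlower : 1 ≤ limsup a atTop := by
    apply le_of_forall_pos_le_add
    intro ε hε
    have key : 1 - ε ≤ limsup a atTop := by
      apply le_limsup_of_frequently_le _ hbdd
      obtain ⟨M, hM⟩ : ∃ M : ℕ, (2:ℝ)⁻¹ ^ M < δ :=
        exists_pow_lt_of_lt_one hδ (by norm_num)
      have hu : Tendsto (fun l => c l + m l - 1) atTop atTop := by
        rw [tendsto_atTop]
        intro b
        filter_upwards [hm.eventually (eventually_ge_atTop (b+1))] with l hl
        omega
      apply hu.frequently
      apply Eventually.frequently
      filter_upwards [hagree M, hm.eventually (eventually_ge_atTop 2),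
        hc.eventually (eventually_lt_nhds hε)] with l hagl hml hcl
      set n := c l + m l - 1 with hn
      have hn1 : n + 1 = c l + m l := by omega
      have hsub : Finset.Ico (c l) (c l + m l) ⊆
          (Finset.range (n+1)).filter
            (fun k => shiftDist (shift^[k] x) (shift^[k] y) < δ) := by
        intro k hk
        rw [Finset.mem_Ico] at hk
        rw [Finset.mem_filter, Finset.mem_range, hn1]
        refine ⟨hk.2, ?_⟩
        apply shiftDist_lt_of_agree _ _ _ M hM
        intro j hj
        rw [shift_iter, shift_iter]
        exact hagl (j + k) (le_trans hk.1 (Nat.le_add_left k j)) (by omega)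
      have hcard : (m l : ℝ) ≤ (((Finset.range (n+1)).filter
          (fun k => shiftDist (shift^[k] x) (shift^[k] y) < δ)).card : ℝ) := by
        have h1 := Finset.card_le_card hsub
        rw [Nat.card_Ico] at h1
        exact_mod_cast le_trans (le_of_eq (by omega)) h1
      have hnpos : (0:ℝ) < (n:ℝ) := by
        have : 0 < n := by omega
        exact_mod_cast this
      have hden : (0:ℝ) < ((c l + m l : ℕ):ℝ) := by
        have : 0 < c l + m l := by omega
        exact_mod_cast this
      have hstep1 : (m l : ℝ) / ((c l + m l : ℕ):ℝ) ≤ (m l : ℝ) / (n:ℝ) := by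
        apply div_le_div_of_nonneg_left (Nat.cast_nonneg _) hnpos
        exact_mod_cast (by omega : n ≤ c l + m l)
      have hstep2 : (m l : ℝ) / (n:ℝ) ≤ a n := by
        rw [ha]
        exact div_le_div_of_nonneg_right hcard (le_of_lt hnpos)
      have hstep3 : 1 - ε ≤ (m l : ℝ) / ((c l + m l : ℕ):ℝ) := by
        have heq : (m l : ℝ) / ((c l + m l : ℕ):ℝ)
            = 1 - (c l : ℝ) / ((c l + m l : ℕ):ℝ) := by
          push_cast
          field_simp
          ring
        rw [heq]
        linarith
      linarith
    linarith
  exact le_antisymm hupper hlower
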